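/- Let f : ℕ → ℕ be a function whose graph {(x_2, x_1) : x_1 = f(x_2)} has a Diophantine representation over ℕ, i.e., there is a polynomial W with integer coefficients such that for all x_1, x_2 ∈ ℕ: x_1 = f(x_2) ⟺ ∃ x_3,...,x_r ∈ ℕ, W(x_1,...,x_r) = 0. Then there exists s ≥ 3 and a conjunction Ψ of equations of the forms x_i = 1, x_i + x_j = x_k, x_i · x_j = x_k (i, j, k ∈ {1,...,s}) such that for all integers x_1, x_2: (x_2 ≥ 0 ∧ x_1 = f(x_2)) ⟺ ∃ x_3,...,x_s ∈ ℤ, Ψ(x_1,...,x_s). -/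

import Mathlib

/-- An equation from the set `E_n`: `x_i = 1`, `x_i + x_j = x_k`, or `x_i * x_j = x_k`
with indices in `{1, ..., n}` (here `Fin n`). -/
inductive Eqn (n : ℕ) where
  | one (i : Fin n)
  | add (i j k : Fin n)
  | mul (i j k : Fin n)

/-- The equation holds for an assignment `x` of values in a commutative semiring. -/
def Eqn.Holds {n : ℕ} {K : Type*} [CommSemiring K] (x : Fin n → K) : Eqn n → Prop
  | .one i => x i = 1
  | .add i j k => x i + x j = x k
  | .mul i j k => x i * x j = x k

/-- Equations with natural-number indices. -/
inductive EqnN where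
  | one (i : ℕ)
  | add (i j k : ℕ)
  | mul (i j k : ℕ)

def EqnN.HoldsN (y : ℕ → ℤ) : EqnN → Prop
  | .one i => y i = 1
  | .add i j k => y i + y j = y k
  | .mul i j k => y i * y j = y k

def EqnN.bound (s : ℕ) : EqnN → Prop
  | .one i => i < s
  | .add i j k => i < s ∧ j < s ∧ k < s
  | .mul i j k => i < s ∧ j < s ∧ k < s

lemma EqnN.bound_mono {s s' : ℕ} (h : s ≤ s') : ∀ {q : EqnN}, q.bound s → q.bound s'
  | .one _, hq => by simp [bound] at *; omega
  | .add _ _ _, hq => by simp [bound] at *; omega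
  | .mul _ _ _, hq => by simp [bound] at *; omega

lemma EqnN.holds_congr {m : ℕ} {y y' : ℕ → ℤ} (hagree : ∀ n < m, y n = y' n)
    {q : EqnN} (hq : q.bound m) : q.HoldsN y ↔ q.HoldsN y' := by
  cases q with
  | one i => simp only [HoldsN]; rw [hagree _ hq]
  | add i j k =>
      obtain ⟨h1, h2, h3⟩ := hq
      simp only [HoldsN]; rw [hagree _ h1, hagree _ h2, hagree _ h3]
  | mul i j k =>
      obtain ⟨h1, h2, h3⟩ := hq
      simp only [HoldsN]; rw [hagree _ h1, hagree _ h2, hagree _ h3]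

/-- Arithmetic expressions. -/
inductive Expr where
  | zero
  | one
  | var (i : ℕ)
  | add (a b : Expr)
  | mul (a b : Expr)

def Expr.eval (y : ℕ → ℤ) : Expr → ℤ
  | .zero => 0
  | .one => 1
  | .var i => y i
  | .add a b => a.eval y + b.eval y
  | .mul a b => a.eval y * b.eval y

def Expr.vbound (r : ℕ) : Expr → Prop
  | .zero => True
  | .one => True
  | .var i => i < r
  | .add a b => a.vbound r ∧ b.vbound r
  | .mul a b => a.vbound r ∧ b.vbound r

lemma Expr.eval_congr {r : ℕ} {y y' : ℕ → ℤ} (hagree : ∀ n < r, y n = y' n) :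
    ∀ {e : Expr}, e.vbound r → e.eval y = e.eval y'
  | .zero, _ => rfl
  | .one, _ => rfl
  | .var i, h => hagree _ h
  | .add a b, h => by
      simp only [eval]; rw [eval_congr hagree h.1, eval_congr hagree h.2]
  | .mul a b, h => by
      simp only [eval]; rw [eval_congr hagree h.1, eval_congr hagree h.2]

def Expr.ofNat : ℕ → Expr
  | 0 => .zero
  | n + 1 => .add (ofNat n) .one

lemma Expr.ofNat_eval (y : ℕ → ℤ) : ∀ n : ℕ, (Expr.ofNat n).eval y = n
  | 0 => rfl
  | n + 1 => by simp [ofNat, eval, ofNat_eval y n]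

lemma Expr.ofNat_vbound (r : ℕ) : ∀ n : ℕ, (Expr.ofNat n).vbound r
  | 0 => trivial
  | n + 1 => ⟨ofNat_vbound r n, trivial⟩

lemma exists_expr {r : ℕ} (W : MvPolynomial (Fin r) ℤ) :
    ∃ P Q : Expr, P.vbound r ∧ Q.vbound r ∧
      ∀ y : ℕ → ℤ, MvPolynomial.aeval (fun i : Fin r => y i) W = P.eval y - Q.eval y := by
  induction W using MvPolynomial.induction_on with
  | C a =>
      refine ⟨.ofNat a.toNat, .ofNat (-a).toNat, Expr.ofNat_vbound r _, Expr.ofNat_vbound r _,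
        fun y => ?_⟩
      rw [Expr.ofNat_eval, Expr.ofNat_eval]
      simp only [MvPolynomial.aeval_C]
      simp only [algebraMap_int_eq, eq_intCast, Int.cast_id]
      omega
  | add p q hp hq =>
      obtain ⟨P1, Q1, hb1, hb1', h1⟩ := hp
      obtain ⟨P2, Q2, hb2, hb2', h2⟩ := hq
      exact ⟨.add P1 P2, .add Q1 Q2, ⟨hb1, hb2⟩, ⟨hb1', hb2'⟩,
        fun y => by rw [map_add, h1 y, h2 y]; simp [Expr.eval]; ring⟩
  | mul_X p i hp =>
      obtain ⟨P1, Q1, hb1, hb1', h1⟩ := hp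
      exact ⟨.mul P1 (.var i), .mul Q1 (.var i), ⟨hb1, i.isLt⟩, ⟨hb1', i.isLt⟩,
        fun y => by rw [map_mul, h1 y, MvPolynomial.aeval_X]; simp [Expr.eval]; ring⟩

def Expr.compile : Expr → ℕ → ℕ × ℕ × List EqnN
  | .zero, f => (f, f + 1, [.add f f f])
  | .one, f => (f, f + 1, [.one f])
  | .var i, f => (i, f, [])
  | .add a b, f =>
      let ca := a.compile f
      let cb := b.compile ca.2.1
      (cb.2.1, cb.2.1 + 1, ca.2.2 ++ cb.2.2 ++ [.add ca.1 cb.1 cb.2.1])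
  | .mul a b, f =>
      let ca := a.compile f
      let cb := b.compile ca.2.1
      (cb.2.1, cb.2.1 + 1, ca.2.2 ++ cb.2.2 ++ [.mul ca.1 cb.1 cb.2.1])

lemma Expr.compile_fresh_le : ∀ (e : Expr) (f : ℕ), f ≤ (e.compile f).2.1
  | .zero, f => Nat.le_succ f
  | .one, f => Nat.le_succ f
  | .var _, f => le_refl f
  | .add a b, f => by
      simp only [compile]
      have h1 := compile_fresh_le a f
      have h2 := compile_fresh_le b (a.compile f).2.1
      omega
  | .mul a b, f => by
      simp only [compile]
      have h1 := compile_fresh_le a f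
      have h2 := compile_fresh_le b (a.compile f).2.1
      omega

lemma Expr.compile_out_lt {r : ℕ} : ∀ {e : Expr}, e.vbound r → ∀ {f : ℕ}, r ≤ f →
    (e.compile f).1 < (e.compile f).2.1
  | .zero, _, f, hf => Nat.lt_succ_self f
  | .one, _, f, hf => Nat.lt_succ_self f
  | .var i, h, f, hf => lt_of_lt_of_le h hf
  | .add a b, h, f, hf => by simp [compile]
  | .mul a b, h, f, hf => by simp [compile]

lemma Expr.compile_eqs_bound {r : ℕ} : ∀ {e : Expr}, e.vbound r → ∀ {f : ℕ}, r ≤ f →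
    ∀ q ∈ (e.compile f).2.2, q.bound (e.compile f).2.1
  | .zero, _, f, hf => by simp [compile, EqnN.bound]
  | .one, _, f, hf => by simp [compile, EqnN.bound]
  | .var i, h, f, hf => by simp [compile]
  | .add a b, h, f, hf => by
      intro q hq
      have hf1 := compile_fresh_le a f
      have hf2 := compile_fresh_le b (a.compile f).2.1
      have hoa := compile_out_lt h.1 hf
      have hob := compile_out_lt h.2 (le_trans hf hf1)
      have hk : ((Expr.add a b).compile f).2.1 = (b.compile (a.compile f).2.1).2.1 + 1 := rfl
      rw [hk]
      simp only [compile, List.mem_append, List.mem_singleton] at hq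
      rcases hq with (hq | hq) | hq
      · exact EqnN.bound_mono (by omega) (compile_eqs_bound h.1 hf q hq)
      · exact EqnN.bound_mono (by omega) (compile_eqs_bound h.2 (le_trans hf hf1) q hq)
      · subst hq; exact ⟨by omega, by omega, by omega⟩
  | .mul a b, h, f, hf => by
      intro q hq
      have hf1 := compile_fresh_le a f
      have hf2 := compile_fresh_le b (a.compile f).2.1
      have hoa := compile_out_lt h.1 hf
      have hob := compile_out_lt h.2 (le_trans hf hf1)
      have hk : ((Expr.mul a b).compile f).2.1 = (b.compile (a.compile f).2.1).2.1 + 1 := rfl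
      rw [hk]
      simp only [compile, List.mem_append, List.mem_singleton] at hq
      rcases hq with (hq | hq) | hq
      · exact EqnN.bound_mono (by omega) (compile_eqs_bound h.1 hf q hq)
      · exact EqnN.bound_mono (by omega) (compile_eqs_bound h.2 (le_trans hf hf1) q hq)
      · subst hq; exact ⟨by omega, by omega, by omega⟩

lemma Expr.compile_sound : ∀ (e : Expr) (f : ℕ) (y : ℕ → ℤ),
    (∀ q ∈ (e.compile f).2.2, q.HoldsN y) → y (e.compile f).1 = e.eval y
  | .zero, f, y, h => by
      have := h (.add f f f) (by simp [compile])
      simp only [EqnN.HoldsN] at this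
      have hk : (Expr.zero.compile f).1 = f := rfl
      rw [hk]; simp only [eval]; omega
  | .one, f, y, h => h (.one f) (by simp [compile])
  | .var i, f, y, h => rfl
  | .add a b, f, y, h => by
      have ha := compile_sound a f y (fun q hq => h q (by simp [compile, hq]))
      have hb := compile_sound b (a.compile f).2.1 y (fun q hq => h q (by simp [compile, hq]))
      have hlast := h (.add (a.compile f).1 (b.compile (a.compile f).2.1).1
        (b.compile (a.compile f).2.1).2.1) (by simp [compile])
      simp only [EqnN.HoldsN] at hlast
      simp only [compile, eval]
      rw [← ha, ← hb]; exact hlast.symm ▸ hlast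
  | .mul a b, f, y, h => by
      have ha := compile_sound a f y (fun q hq => h q (by simp [compile, hq]))
      have hb := compile_sound b (a.compile f).2.1 y (fun q hq => h q (by simp [compile, hq]))
      have hlast := h (.mul (a.compile f).1 (b.compile (a.compile f).2.1).1
        (b.compile (a.compile f).2.1).2.1) (by simp [compile])
      simp only [EqnN.HoldsN] at hlast
      simp only [compile, eval]
      rw [← ha, ← hb]; exact hlast.symm ▸ hlast

lemma Expr.compile_complete {r : ℕ} : ∀ (e : Expr), e.vbound r → ∀ (f : ℕ), r ≤ f →
    ∀ (y : ℕ → ℤ), ∃ y' : ℕ → ℤ, (∀ n < f, y' n = y n) ∧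
      (∀ q ∈ (e.compile f).2.2, q.HoldsN y') ∧ y' (e.compile f).1 = e.eval y
  | .zero, _, f, hf, y => by
      refine ⟨Function.update y f 0, fun n hn => Function.update_of_ne (by omega) _ _, ?_, ?_⟩
      · intro q hq
        have : q = .add f f f := by simpa [compile] using hq
        subst this
        simp [EqnN.HoldsN, Function.update_self]
      · have hk : (Expr.zero.compile f).1 = f := rfl
        rw [hk]; simp [eval, Function.update_self]
  | .one, _, f, hf, y => by
      refine ⟨Function.update y f 1, fun n hn => Function.update_of_ne (by omega) _ _, ?_, ?_⟩
      · intro q hq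
        have : q = .one f := by simpa [compile] using hq
        subst this
        simp [EqnN.HoldsN, Function.update_self]
      · have hk : (Expr.one.compile f).1 = f := rfl
        rw [hk]; simp [eval, Function.update_self]
  | .var i, h, f, hf, y => ⟨y, fun n _ => rfl, by simp [compile], rfl⟩
  | .add a b, h, f, hf, y => by
      obtain ⟨y1, hy1a, hy1h, hy1o⟩ := compile_complete a h.1 f hf y
      have hf1 : f ≤ (a.compile f).2.1 := compile_fresh_le a f
      have hf2 : (a.compile f).2.1 ≤ (b.compile (a.compile f).2.1).2.1 :=
        compile_fresh_le b _
      have hoa : (a.compile f).1 < (a.compile f).2.1 := compile_out_lt h.1 hf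
      have hob : (b.compile (a.compile f).2.1).1 < (b.compile (a.compile f).2.1).2.1 :=
        compile_out_lt h.2 (le_trans hf hf1)
      obtain ⟨y2, hy2a, hy2h, hy2o⟩ := compile_complete b h.2 (a.compile f).2.1
        (le_trans hf hf1) y1
      set F2 := (b.compile (a.compile f).2.1).2.1 with hF2
      refine ⟨Function.update y2 F2 (y2 (a.compile f).1 + y2 (b.compile (a.compile f).2.1).1),
        ?_, ?_, ?_⟩
      · intro n hn
        rw [Function.update_of_ne (by omega)]
        rw [hy2a n (by omega), hy1a n hn]
      · intro q hq
        have hk : ((Expr.add a b).compile f).2.2 =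
            (a.compile f).2.2 ++ (b.compile (a.compile f).2.1).2.2 ++
              [.add (a.compile f).1 (b.compile (a.compile f).2.1).1 F2] := rfl
        rw [hk] at hq
        simp only [List.mem_append, List.mem_singleton] at hq
        rcases hq with (hq | hq) | hq
        · have hb := compile_eqs_bound h.1 hf q hq
          rw [← EqnN.holds_congr (y := y1) (m := (a.compile f).2.1) ?_ hb]
          · exact hy1h q hq
          · intro n hn
            rw [Function.update_of_ne (by omega), hy2a n hn]
        · have hb := compile_eqs_bound h.2 (le_trans hf hf1) q hq
          rw [← EqnN.holds_congr (y := y2) (m := F2) ?_ hb]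
          · exact hy2h q hq
          · intro n hn
            rw [Function.update_of_ne (by omega)]
        · subst hq
          simp only [EqnN.HoldsN]
          rw [Function.update_self, Function.update_of_ne (by omega),
            Function.update_of_ne (by omega)]
      · have hk : ((Expr.add a b).compile f).1 = F2 := rfl
        rw [hk, Function.update_self]
        have h1 : y2 (a.compile f).1 = y1 (a.compile f).1 := hy2a _ hoa
        have h2 : b.eval y1 = b.eval y := Expr.eval_congr (fun n hn => hy1a n (by omega)) h.2
        rw [h1, hy1o, hy2o, h2]
        rfl
  | .mul a b, h, f, hf, y => by
      obtain ⟨y1, hy1a, hy1h, hy1o⟩ := compile_complete a h.1 f hf y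
      have hf1 : f ≤ (a.compile f).2.1 := compile_fresh_le a f
      have hf2 : (a.compile f).2.1 ≤ (b.compile (a.compile f).2.1).2.1 :=
        compile_fresh_le b _
      have hoa : (a.compile f).1 < (a.compile f).2.1 := compile_out_lt h.1 hf
      have hob : (b.compile (a.compile f).2.1).1 < (b.compile (a.compile f).2.1).2.1 :=
        compile_out_lt h.2 (le_trans hf hf1)
      obtain ⟨y2, hy2a, hy2h, hy2o⟩ := compile_complete b h.2 (a.compile f).2.1
        (le_trans hf hf1) y1
      set F2 := (b.compile (a.compile f).2.1).2.1 with hF2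
      refine ⟨Function.update y2 F2 (y2 (a.compile f).1 * y2 (b.compile (a.compile f).2.1).1),
        ?_, ?_, ?_⟩
      · intro n hn
        rw [Function.update_of_ne (by omega)]
        rw [hy2a n (by omega), hy1a n hn]
      · intro q hq
        have hk : ((Expr.mul a b).compile f).2.2 =
            (a.compile f).2.2 ++ (b.compile (a.compile f).2.1).2.2 ++
              [.mul (a.compile f).1 (b.compile (a.compile f).2.1).1 F2] := rfl
        rw [hk] at hq
        simp only [List.mem_append, List.mem_singleton] at hq
        rcases hq with (hq | hq) | hq
        · have hb := compile_eqs_bound h.1 hf q hq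
          rw [← EqnN.holds_congr (y := y1) (m := (a.compile f).2.1) ?_ hb]
          · exact hy1h q hq
          · intro n hn
            rw [Function.update_of_ne (by omega), hy2a n hn]
        · have hb := compile_eqs_bound h.2 (le_trans hf hf1) q hq
          rw [← EqnN.holds_congr (y := y2) (m := F2) ?_ hb]
          · exact hy2h q hq
          · intro n hn
            rw [Function.update_of_ne (by omega)]
        · subst hq
          simp only [EqnN.HoldsN]
          rw [Function.update_self, Function.update_of_ne (by omega),
            Function.update_of_ne (by omega)]
      · have hk : ((Expr.mul a b).compile f).1 = F2 := rfl
        rw [hk, Function.update_self]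
        have h1 : y2 (a.compile f).1 = y1 (a.compile f).1 := hy2a _ hoa
        have h2 : b.eval y1 = b.eval y := Expr.eval_congr (fun n hn => hy1a n (by omega)) h.2
        rw [h1, hy1o, hy2o, h2]
        rfl

def sqEqs (r : ℕ) : List EqnN :=
  (List.range r).flatMap fun i =>
    [.mul (r + 10 * i) (r + 10 * i) (r + 10 * i + 4),
     .mul (r + 10 * i + 1) (r + 10 * i + 1) (r + 10 * i + 5),
     .mul (r + 10 * i + 2) (r + 10 * i + 2) (r + 10 * i + 6),
     .mul (r + 10 * i + 3) (r + 10 * i + 3) (r + 10 * i + 7),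
     .add (r + 10 * i + 4) (r + 10 * i + 5) (r + 10 * i + 8),
     .add (r + 10 * i + 8) (r + 10 * i + 6) (r + 10 * i + 9),
     .add (r + 10 * i + 9) (r + 10 * i + 7) i]

lemma sqEqs_bound {r : ℕ} {q : EqnN} (hq : q ∈ sqEqs r) : q.bound (11 * r) := by
  simp only [sqEqs, List.mem_flatMap, List.mem_range] at hq
  obtain ⟨i, hi, hq⟩ := hq
  simp only [List.mem_cons, List.not_mem_nil, or_false] at hq
  rcases hq with h | h | h | h | h | h | h <;> subst h <;>
    exact ⟨by omega, by omega, by omega⟩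

lemma sqEqs_mem {r i : ℕ} (hi : i < r) {q : EqnN}
    (hq : q ∈ ([.mul (r + 10 * i) (r + 10 * i) (r + 10 * i + 4),
     .mul (r + 10 * i + 1) (r + 10 * i + 1) (r + 10 * i + 5),
     .mul (r + 10 * i + 2) (r + 10 * i + 2) (r + 10 * i + 6),
     .mul (r + 10 * i + 3) (r + 10 * i + 3) (r + 10 * i + 7),
     .add (r + 10 * i + 4) (r + 10 * i + 5) (r + 10 * i + 8),
     .add (r + 10 * i + 8) (r + 10 * i + 6) (r + 10 * i + 9),
     .add (r + 10 * i + 9) (r + 10 * i + 7) i] : List EqnN)) : q ∈ sqEqs r :=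
  List.mem_flatMap.2 ⟨i, List.mem_range.2 hi, hq⟩

lemma sqEqs_sound {r : ℕ} {y : ℕ → ℤ} (h : ∀ q ∈ sqEqs r, q.HoldsN y)
    {i : ℕ} (hi : i < r) : 0 ≤ y i := by
  have h1 := h (.mul (r + 10 * i) (r + 10 * i) (r + 10 * i + 4)) (sqEqs_mem hi (by simp))
  have h2 := h (.mul (r + 10 * i + 1) (r + 10 * i + 1) (r + 10 * i + 5)) (sqEqs_mem hi (by simp))
  have h3 := h (.mul (r + 10 * i + 2) (r + 10 * i + 2) (r + 10 * i + 6)) (sqEqs_mem hi (by simp))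
  have h4 := h (.mul (r + 10 * i + 3) (r + 10 * i + 3) (r + 10 * i + 7)) (sqEqs_mem hi (by simp))
  have h5 := h (.add (r + 10 * i + 4) (r + 10 * i + 5) (r + 10 * i + 8)) (sqEqs_mem hi (by simp))
  have h6 := h (.add (r + 10 * i + 8) (r + 10 * i + 6) (r + 10 * i + 9)) (sqEqs_mem hi (by simp))
  have h7 := h (.add (r + 10 * i + 9) (r + 10 * i + 7) i) (sqEqs_mem hi (by simp))
  simp only [EqnN.HoldsN] at h1 h2 h3 h4 h5 h6 h7
  nlinarith [mul_self_nonneg (y (r + 10 * i)), mul_self_nonneg (y (r + 10 * i + 1)),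
    mul_self_nonneg (y (r + 10 * i + 2)), mul_self_nonneg (y (r + 10 * i + 3))]

lemma sqEqs_complete {r : ℕ} (y : ℕ → ℤ) (hnn : ∀ i < r, 0 ≤ y i) :
    ∃ y' : ℕ → ℤ, (∀ n, n < r → y' n = y n) ∧ (∀ n, 11 * r ≤ n → y' n = y n) ∧
      ∀ q ∈ sqEqs r, q.HoldsN y' := by
  classical
  have key : ∀ n : ℕ, ∃ a b c d : ℤ, n < r → a ^ 2 + b ^ 2 + c ^ 2 + d ^ 2 = y n := by
    intro n
    by_cases hn : n < r
    · obtain ⟨a, b, c, d, habcd⟩ := Nat.sum_four_squares (y n).toNat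
      refine ⟨a, b, c, d, fun _ => ?_⟩
      have h2 : ((a ^ 2 + b ^ 2 + c ^ 2 + d ^ 2 : ℕ) : ℤ) = y n := by
        rw [habcd, Int.toNat_of_nonneg (hnn n hn)]
      push_cast at h2
      linarith
    · exact ⟨0, 0, 0, 0, fun h => absurd h hn⟩
  choose A B C D hABCD using key
  set V : ℕ → ℕ → ℤ := fun i j =>
    match j with
    | 0 => A i | 1 => B i | 2 => C i | 3 => D i
    | 4 => A i ^ 2 | 5 => B i ^ 2 | 6 => C i ^ 2 | 7 => D i ^ 2
    | 8 => A i ^ 2 + B i ^ 2 | _ => A i ^ 2 + B i ^ 2 + C i ^ 2 with hV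
  set y' : ℕ → ℤ := fun n =>
    if n < r then y n else if n < 11 * r then V ((n - r) / 10) ((n - r) % 10) else y n with hy'
  have hval : ∀ i < r, ∀ j < 10, y' (r + 10 * i + j) = V i j := by
    intro i hi j hj
    have hnr : ¬ (r + 10 * i + j < r) := by omega
    have hlt : r + 10 * i + j < 11 * r := by omega
    simp only [hy', if_neg hnr, if_pos hlt]
    congr 1 <;> omega
  have hlow : ∀ n, n < r → y' n = y n := fun n hn => by simp only [hy', if_pos hn]
  refine ⟨y', hlow, fun n hn => by simp only [hy']; rw [if_neg (by omega), if_neg (by omega)], ?_⟩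
  intro q hq
  simp only [sqEqs, List.mem_flatMap, List.mem_range] at hq
  obtain ⟨i, hi, hq⟩ := hq
  have e0 := hval i hi 0 (by omega)
  have e1 := hval i hi 1 (by omega)
  have e2 := hval i hi 2 (by omega)
  have e3 := hval i hi 3 (by omega)
  have e4 := hval i hi 4 (by omega)
  have e5 := hval i hi 5 (by omega)
  have e6 := hval i hi 6 (by omega)
  have e7 := hval i hi 7 (by omega)
  have e8 := hval i hi 8 (by omega)
  have e9 := hval i hi 9 (by omega)
  have ei : y' i = A i ^ 2 + B i ^ 2 + C i ^ 2 + D i ^ 2 := by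
    rw [hlow i hi, ← hABCD i hi]
  simp only [List.mem_cons, List.not_mem_nil, or_false] at hq
  have hadd0 : r + 10 * i + 0 = r + 10 * i := by omega
  rw [hadd0] at e0
  rcases hq with h | h | h | h | h | h | h <;> subst h <;>
    simp only [EqnN.HoldsN, e0, e1, e2, e3, e4, e5, e6, e7, e8, e9, ei, hV] <;> ring

def EqnN.toEqn {s : ℕ} (hs : 0 < s) : EqnN → Eqn s
  | .one i => .one ⟨i % s, Nat.mod_lt _ hs⟩
  | .add i j k => .add ⟨i % s, Nat.mod_lt _ hs⟩ ⟨j % s, Nat.mod_lt _ hs⟩ ⟨k % s, Nat.mod_lt _ hs⟩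
  | .mul i j k => .mul ⟨i % s, Nat.mod_lt _ hs⟩ ⟨j % s, Nat.mod_lt _ hs⟩ ⟨k % s, Nat.mod_lt _ hs⟩

lemma EqnN.holds_toEqn {s : ℕ} (hs : 0 < s) (y : Fin s → ℤ) (yN : ℕ → ℤ)
    (hy : ∀ n (h : n < s), yN n = y ⟨n, h⟩) : ∀ {q : EqnN}, q.bound s →
    ((q.toEqn hs).Holds y ↔ q.HoldsN yN)
  | .one i, hq => by
      have e1 : (⟨i % s, Nat.mod_lt _ hs⟩ : Fin s) = ⟨i, hq⟩ := Fin.ext (Nat.mod_eq_of_lt hq)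
      simp only [toEqn, Eqn.Holds, HoldsN, e1, hy i hq]
  | .add i j k, hq => by
      obtain ⟨h1, h2, h3⟩ := hq
      have e1 : (⟨i % s, Nat.mod_lt _ hs⟩ : Fin s) = ⟨i, h1⟩ := Fin.ext (Nat.mod_eq_of_lt h1)
      have e2 : (⟨j % s, Nat.mod_lt _ hs⟩ : Fin s) = ⟨j, h2⟩ := Fin.ext (Nat.mod_eq_of_lt h2)
      have e3 : (⟨k % s, Nat.mod_lt _ hs⟩ : Fin s) = ⟨k, h3⟩ := Fin.ext (Nat.mod_eq_of_lt h3)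
      simp only [toEqn, Eqn.Holds, HoldsN, e1, e2, e3, hy i h1, hy j h2, hy k h3]
  | .mul i j k, hq => by
      obtain ⟨h1, h2, h3⟩ := hq
      have e1 : (⟨i % s, Nat.mod_lt _ hs⟩ : Fin s) = ⟨i, h1⟩ := Fin.ext (Nat.mod_eq_of_lt h1)
      have e2 : (⟨j % s, Nat.mod_lt _ hs⟩ : Fin s) = ⟨j, h2⟩ := Fin.ext (Nat.mod_eq_of_lt h2)
      have e3 : (⟨k % s, Nat.mod_lt _ hs⟩ : Fin s) = ⟨k, h3⟩ := Fin.ext (Nat.mod_eq_of_lt h3)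
      simp only [toEqn, Eqn.Holds, HoldsN, e1, e2, e3, hy i h1, hy j h2, hy k h3]

theorem stmt_14 (f : ℕ → ℕ) (r : ℕ) (hr : 2 ≤ r) (W : MvPolynomial (Fin r) ℤ)
    (hW : ∀ x1 x2 : ℕ, x1 = f x2 ↔
      ∃ x : Fin r → ℕ, x ⟨0, by omega⟩ = x1 ∧ x ⟨1, by omega⟩ = x2 ∧
        MvPolynomial.aeval (fun i => (x i : ℤ)) W = 0) :
    ∃ (s : ℕ) (hs : 3 ≤ s) (Ψ : List (Eqn s)),
      ∀ x1 x2 : ℤ, (0 ≤ x2 ∧ x1 = (f x2.toNat : ℤ)) ↔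
        ∃ y : Fin s → ℤ, y ⟨0, by omega⟩ = x1 ∧ y ⟨1, by omega⟩ = x2 ∧
          ∀ e ∈ Ψ, e.Holds y := by
  classical
  obtain ⟨P, Q, hPb, hQb, hPQ⟩ := exists_expr W
  set F0 := 11 * r with hF0def
  set oP := (P.compile F0).1 with hoPdef
  set F1 := (P.compile F0).2.1 with hF1def
  set eP := (P.compile F0).2.2 with hePdef
  set oQ := (Q.compile F1).1 with hoQdef
  set F2 := (Q.compile F1).2.1 with hF2def
  set eQ := (Q.compile F1).2.2 with heQdef
  have hrF0 : r ≤ F0 := by omega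
  have hF01 : F0 ≤ F1 := P.compile_fresh_le F0
  have hF12 : F1 ≤ F2 := Q.compile_fresh_le F1
  have hoPlt : oP < F1 := P.compile_out_lt hPb hrF0
  have hoQlt : oQ < F2 := Q.compile_out_lt hQb (le_trans hrF0 hF01)
  have hePbd : ∀ q ∈ eP, q.bound F1 := P.compile_eqs_bound hPb hrF0
  have heQbd : ∀ q ∈ eQ, q.bound F2 := Q.compile_eqs_bound hQb (le_trans hrF0 hF01)
  set s := F2 + 1 with hsdef
  have hs0 : 0 < s := by omega
  have hs3 : 3 ≤ s := by omega
  set allEqs : List EqnN :=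
    sqEqs r ++ eP ++ eQ ++ [.add F2 F2 F2, .add oP F2 oQ] with hallEqs
  have hmem : ∀ q : EqnN, q ∈ allEqs ↔ q ∈ sqEqs r ∨ q ∈ eP ∨ q ∈ eQ ∨
      q = EqnN.add F2 F2 F2 ∨ q = EqnN.add oP F2 oQ := by
    intro q
    rw [hallEqs]
    simp only [List.mem_append, List.mem_cons, List.not_mem_nil, or_false, or_assoc]
  have hallb : ∀ q ∈ allEqs, q.bound s := by
    intro q hq
    rcases (hmem q).1 hq with hq | hq | hq | hq | hq
    · exact EqnN.bound_mono (by omega) (sqEqs_bound hq)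
    · exact EqnN.bound_mono (by omega) (hePbd q hq)
    · exact EqnN.bound_mono (by omega) (heQbd q hq)
    · subst hq; exact ⟨by omega, by omega, by omega⟩
    · subst hq; exact ⟨by omega, by omega, by omega⟩
  refine ⟨s, hs3, allEqs.map (EqnN.toEqn hs0), fun x1 x2 => ⟨?_, ?_⟩⟩
  · rintro ⟨hx2, hx1⟩
    obtain ⟨x, hx0, hxx1, haev⟩ := (hW (f x2.toNat) x2.toNat).1 rfl
    set yN0 : ℕ → ℤ := fun n => if h : n < r then (x ⟨n, h⟩ : ℤ) else 0 with hyN0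
    have hnn : ∀ i < r, 0 ≤ yN0 i := by
      intro i hi
      simp only [hyN0, dif_pos hi]
      exact Int.natCast_nonneg _
    obtain ⟨y1, hy1l, hy1h, hy1sq⟩ := sqEqs_complete yN0 hnn
    obtain ⟨y2, hy2a, hy2e, hy2o⟩ := P.compile_complete hPb F0 hrF0 y1
    obtain ⟨y3, hy3a, hy3e, hy3o⟩ := Q.compile_complete hQb F1 (le_trans hrF0 hF01) y2
    set y4 := Function.update y3 F2 0 with hy4
    have a43 : ∀ n < F2, y4 n = y3 n := fun n hn => Function.update_of_ne (by omega) _ _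
    have a42 : ∀ n < F1, y4 n = y2 n := fun n hn => by
      rw [a43 n (by omega), hy3a n hn]
    have a41 : ∀ n < F0, y4 n = y1 n := fun n hn => by
      rw [a42 n (by omega), hy2a n hn]
    have hx1N : ∀ n (hn : n < r), y1 n = (x ⟨n, hn⟩ : ℤ) := by
      intro n hn
      rw [hy1l n hn]
      simp only [hyN0, dif_pos hn]
    have haevy1 : MvPolynomial.aeval (fun i : Fin r => y1 i) W = 0 := by
      have hfe : (fun i : Fin r => y1 i) = fun i : Fin r => (x i : ℤ) :=
        funext fun i => hx1N i.val i.isLt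
      rw [hfe]; exact haev
    have hPQeq : P.eval y1 = Q.eval y1 := by
      have := hPQ y1
      rw [haevy1] at this
      linarith
    have hz : y4 F2 = 0 := Function.update_self _ _ _
    have hvoP : y4 oP = P.eval y1 := by rw [a42 oP hoPlt]; exact hy2o
    have hvoQ : y4 oQ = Q.eval y1 := by
      rw [a43 oQ hoQlt, hy3o]
      exact Expr.eval_congr (fun n hn => hy2a n (by omega)) hQb
    have hally4 : ∀ q ∈ allEqs, q.HoldsN y4 := by
      intro q hq
      rcases (hmem q).1 hq with hq | hq | hq | hq | hq
      · exact (EqnN.holds_congr a41 (sqEqs_bound hq)).2 (hy1sq q hq)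
      · exact (EqnN.holds_congr a42 (hePbd q hq)).2 (hy2e q hq)
      · exact (EqnN.holds_congr a43 (heQbd q hq)).2 (hy3e q hq)
      · subst hq
        simp only [EqnN.HoldsN, hz]
        ring
      · subst hq
        simp only [EqnN.HoldsN, hz, hvoP, hvoQ, add_zero]
        exact hPQeq
    refine ⟨fun i => y4 i.val, ?_, ?_, ?_⟩
    · show y4 0 = x1
      have e0 : y4 0 = ((x ⟨0, by omega⟩ : ℕ) : ℤ) := by
        rw [a41 0 (by omega)]; exact hx1N 0 (by omega)
      rw [e0, hx0, hx1]
    · show y4 1 = x2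
      have e1 : y4 1 = ((x ⟨1, by omega⟩ : ℕ) : ℤ) := by
        rw [a41 1 (by omega)]; exact hx1N 1 (by omega)
      rw [e1, hxx1]
      exact Int.toNat_of_nonneg hx2
    · intro e he
      rw [List.mem_map] at he
      obtain ⟨q, hq, rfl⟩ := he
      exact (EqnN.holds_toEqn hs0 _ y4 (fun n h => rfl) (hallb q hq)).2 (hally4 q hq)
  · rintro ⟨y, hy0, hy1v, hall⟩
    set yN : ℕ → ℤ := fun n => if h : n < s then y ⟨n, h⟩ else 0 with hyNdef
    have hyr : ∀ n (h : n < s), yN n = y ⟨n, h⟩ := fun n h => dif_pos h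
    have hallN : ∀ q ∈ allEqs, q.HoldsN yN := fun q hq =>
      (EqnN.holds_toEqn hs0 y yN hyr (hallb q hq)).1 (hall _ (List.mem_map_of_mem hq))
    have hnn : ∀ i < r, 0 ≤ yN i := by
      intro i hi
      refine sqEqs_sound (fun q hq => hallN q ?_) hi
      exact (hmem q).2 (Or.inl hq)
    have hsoP : yN oP = P.eval yN := by
      refine P.compile_sound F0 yN (fun q hq => hallN q ?_)
      rw [← hePdef] at hq
      exact (hmem q).2 (Or.inr (Or.inl hq))
    have hsoQ : yN oQ = Q.eval yN := by
      refine Q.compile_sound F1 yN (fun q hq => hallN q ?_)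
      rw [← heQdef] at hq
      exact (hmem q).2 (Or.inr (Or.inr (Or.inl hq)))
    have hzN : yN F2 = 0 := by
      have := hallN (.add F2 F2 F2) ((hmem _).2 (by tauto))
      simp only [EqnN.HoldsN] at this
      linarith
    have hlastN : yN oP + yN F2 = yN oQ := by
      have := hallN (.add oP F2 oQ) ((hmem _).2 (by tauto))
      exact this
    have haevN : MvPolynomial.aeval (fun i : Fin r => yN i) W = 0 := by
      rw [hPQ yN, ← hsoP, ← hsoQ]
      linarith
    set x : Fin r → ℕ := fun i => (yN i).toNat with hxdef
    have hcast : ∀ i : Fin r, (x i : ℤ) = yN i := fun i =>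
      Int.toNat_of_nonneg (hnn i.val i.isLt)
    have haevx : MvPolynomial.aeval (fun i : Fin r => (x i : ℤ)) W = 0 := by
      have hfe : (fun i : Fin r => (x i : ℤ)) = fun i : Fin r => yN i := funext hcast
      rw [hfe]; exact haevN
    have h0r : (0 : ℕ) < r := by omega
    have h1r : (1 : ℕ) < r := by omega
    have hfx := (hW (x ⟨0, h0r⟩) (x ⟨1, h1r⟩)).2 ⟨x, rfl, rfl, haevx⟩
    have hfxZ : ((x ⟨0, h0r⟩ : ℕ) : ℤ) = ((f (x ⟨1, h1r⟩) : ℕ) : ℤ) := by exact_mod_cast hfx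
    have hx2v : x2 = yN 1 := by
      rw [hyr 1 (by omega)]
      exact hy1v.symm
    have hx2nn : 0 ≤ x2 := by rw [hx2v]; exact hnn 1 (by omega)
    refine ⟨hx2nn, ?_⟩
    have hx1v : x1 = yN 0 := by
      rw [hyr 0 (by omega)]
      exact hy0.symm
    have hxt : x ⟨1, h1r⟩ = x2.toNat := by
      show (yN 1).toNat = x2.toNat
      rw [← hx2v]
    calc x1 = yN 0 := hx1v
      _ = ((x ⟨0, h0r⟩ : ℕ) : ℤ) := (hcast ⟨0, h0r⟩).symm
      _ = ((f (x ⟨1, h1r⟩) : ℕ) : ℤ) := hfxZ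
      _ = ((f x2.toNat : ℕ) : ℤ) := by rw [hxt]
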